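/- Let a, b be positive reals with a/b irrational. Then in ℝ⁴, the box a×a×b×b cannot be partitioned into finitely many boxes each of which has, in some three of its four coordinate directions, equal side lengths (i.e., boxes of type x×x×x×y up to permutation of coordinates). -/

import Mathlib

/-- An axis-parallel box in ℝⁿ with positive side lengths. -/
structure Box (n : ℕ) where
  lower : Fin n → ℝ
  upper : Fin n → ℝ
  lower_lt_upper : ∀ i, lower i < upper i

namespace Box

/-- The closed box as a subset of ℝⁿ. -/
def toSet {n : ℕ} (B : Box n) : Set (Fin n → ℝ) :=
  Set.univ.pi fun i => Set.Icc (B.lower i) (B.upper i)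

/-- The open interior of the box. -/
def interiorSet {n : ℕ} (B : Box n) : Set (Fin n → ℝ) :=
  Set.univ.pi fun i => Set.Ioo (B.lower i) (B.upper i)

/-- The side length of the box in direction `i`. -/
def side {n : ℕ} (B : Box n) (i : Fin n) : ℝ := B.upper i - B.lower i

end Box

/-- The boxes `t` form a finite partition (dissection) of `B`:
pairwise disjoint interiors, and their union covers `B`. -/
def IsDissection {n m : ℕ} (B : Box n) (t : Fin m → Box n) : Prop :=
  (∀ i j, i ≠ j → Disjoint (t i).interiorSet (t j).interiorSet) ∧
  (⋃ i, (t i).toSet) = B.toSet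

/-- `P` is cut by a hyperplane parallel to a pair of its faces into `P₁` and `P₂`. -/
def IsSplit {n : ℕ} (P P₁ P₂ : Box n) : Prop :=
  ∃ (j : Fin n) (c : ℝ), P.lower j < c ∧ c < P.upper j ∧
    P₁.lower = P.lower ∧ P₁.upper = Function.update P.upper j c ∧
    P₂.lower = Function.update P.lower j c ∧ P₂.upper = P.upper

noncomputable section AuxProof

/-- Convert our closed box to a `BoxIntegral` (half-open) box. -/
def Box.toBI (P : Box 4) : BoxIntegral.Box (Fin 4) := ⟨P.lower, P.upper, P.lower_lt_upper⟩

lemma mem_toBI {P : Box 4} {x : Fin 4 → ℝ} :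
    x ∈ P.toBI ↔ ∀ j, P.lower j < x j ∧ x j ≤ P.upper j := by
  simp [Box.toBI, BoxIntegral.Box.mem_def, Set.mem_Ioc]

lemma mem_toSet {P : Box 4} {x : Fin 4 → ℝ} :
    x ∈ P.toSet ↔ ∀ j, P.lower j ≤ x j ∧ x j ≤ P.upper j := by
  simp [Box.toSet, Set.mem_pi, Set.mem_Icc, Pi.le_def, forall_and]

lemma mem_interiorSet {P : Box 4} {x : Fin 4 → ℝ} :
    x ∈ P.interiorSet ↔ ∀ j, P.lower j < x j ∧ x j < P.upper j := by
  simp [Box.interiorSet, Set.mem_pi, Set.mem_Ioo]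

/-- If two boxes share a point of their half-open (Ioc) versions, their open interiors meet. -/
lemma not_disjoint_interior {P Q : Box 4} {y : Fin 4 → ℝ}
    (hP : ∀ j, P.lower j < y j ∧ y j ≤ P.upper j)
    (hQ : ∀ j, Q.lower j < y j ∧ y j ≤ Q.upper j) :
    ¬ Disjoint P.interiorSet Q.interiorSet := by
  rw [Set.not_disjoint_iff]
  refine ⟨fun k => (max (P.lower k) (Q.lower k) + y k) / 2, ?_, ?_⟩ <;>
    rw [mem_interiorSet] <;> intro k <;>
    [ (have h1 : P.lower k ≤ max (P.lower k) (Q.lower k) := le_max_left _ _);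
      (have h1 : Q.lower k ≤ max (P.lower k) (Q.lower k) := le_max_right _ _)] <;>
    have h2 : max (P.lower k) (Q.lower k) < y k := max_lt (hP k).1 (hQ k).1
  · exact ⟨by nlinarith, by nlinarith [(hP k).2]⟩
  · exact ⟨by nlinarith, by nlinarith [(hQ k).2]⟩

lemma toBI_le {P B : Box 4} (hsub : P.toSet ⊆ B.toSet) : P.toBI ≤ B.toBI := by
  rw [BoxIntegral.Box.le_iff_bounds]
  have hlow : P.lower ∈ P.toSet := by
    rw [mem_toSet]; exact fun j => ⟨le_rfl, (P.lower_lt_upper j).le⟩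
  have hup : P.upper ∈ P.toSet := by
    rw [mem_toSet]; exact fun j => ⟨(P.lower_lt_upper j).le, le_rfl⟩
  have h1 := mem_toSet.1 (hsub hlow)
  have h2 := mem_toSet.1 (hsub hup)
  exact ⟨fun j => (h1 j).1, fun j => (h2 j).2⟩

/-- Coverage: every point of the half-open big box lies in the half-open version
of one of the pieces. -/
lemma exists_piece {m : ℕ} {B : Box 4} {t : Fin m → Box 4}
    (hcov : (⋃ i, (t i).toSet) = B.toSet) {x : Fin 4 → ℝ} (hx : x ∈ B.toBI) :
    ∃ i, x ∈ (t i).toBI := by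
  rw [mem_toBI] at hx
  have h4 : (Finset.univ : Finset (Fin 4)).Nonempty := ⟨0, Finset.mem_univ _⟩
  set δ : ℝ := Finset.univ.inf' h4 (fun j => x j - B.lower j) with hδdef
  have hδpos : 0 < δ := by
    rw [hδdef, Finset.lt_inf'_iff]
    exact fun j _ => sub_pos.2 (hx j).1
  have hδle : ∀ j, δ ≤ x j - B.lower j := fun j =>
    Finset.inf'_le _ (Finset.mem_univ j)
  -- the approximating points
  set pt : ℕ → (Fin 4 → ℝ) := fun n j => x j - δ / (n + 1) with hptdef
  have hpt : ∀ n, pt n ∈ B.toSet := by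
    intro n
    rw [mem_toSet]
    intro j
    have hp : (0:ℝ) < (n:ℝ) + 1 := by positivity
    have h1 : δ / (n + 1) ≤ δ := by
      apply div_le_self hδpos.le; linarith
    have h2 : 0 < δ / ((n:ℝ) + 1) := by positivity
    exact ⟨by have := hδle j; simp only [hptdef]; linarith,
      by simp only [hptdef]; have := (hx j).2; linarith⟩
  have hcov' : ∀ n, ∃ i, pt n ∈ (t i).toSet := by
    intro n
    have : pt n ∈ ⋃ i, (t i).toSet := by rw [hcov]; exact hpt n
    exact Set.mem_iUnion.1 this
  choose F hF using hcov'
  obtain ⟨i, hinf⟩ := Finite.exists_infinite_fiber F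
  replace hinf : (F ⁻¹' {i}).Infinite := Set.infinite_coe_iff.1 hinf
  refine ⟨i, mem_toBI.2 fun j => ⟨?_, ?_⟩⟩
  · obtain ⟨n, hn⟩ := hinf.nonempty
    have hmem := hF n
    rw [Set.mem_preimage, Set.mem_singleton_iff] at hn
    rw [hn] at hmem
    have := (mem_toSet.1 hmem j).1
    have h2 : 0 < δ / ((n:ℝ) + 1) := by positivity
    simp only [hptdef] at this
    linarith
  · by_contra hcon
    push_neg at hcon
    set d := x j - (t i).upper j with hd
    have hdpos : 0 < d := sub_pos.2 hcon
    obtain ⟨N, hN⟩ := exists_nat_gt (δ / d)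
    obtain ⟨n, hn, hNn⟩ := hinf.exists_gt N
    rw [Set.mem_preimage, Set.mem_singleton_iff] at hn
    have hmem := hF n
    rw [hn] at hmem
    have hub := (mem_toSet.1 hmem j).2
    simp only [hptdef] at hub
    -- δ / (n+1) < d
    have hcast : (N:ℝ) < (n:ℝ) := by exact_mod_cast hNn
    have hp : (0:ℝ) < (n:ℝ) + 1 := by positivity
    rw [div_lt_iff₀ hdpos] at hN
    have : δ / ((n:ℝ) + 1) < d := by
      rw [div_lt_iff₀ hp]
      nlinarith
    linarith

open BoxIntegral in
/-- Key additivity: for additive `h j`, the product of `h j` of side lengths is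
additive over dissections. -/
lemma dissection_sum {m : ℕ} (B : Box 4) (t : Fin m → Box 4)
    (hd : IsDissection B t) (h : Fin 4 → ℝ → ℝ)
    (hadd : ∀ j u v, h j (u + v) = h j u + h j v) :
    ∑ i : Fin m, ∏ j : Fin 4, h j ((t i).side j) = ∏ j : Fin 4, h j (B.side j) := by
  classical
  obtain ⟨hdisj, hcov⟩ := hd
  set μ : BoxIntegral.Box (Fin 4) → ℝ := fun I => ∏ j, h j (I.upper j - I.lower j) with hμ
  have hsplit : ∀ I : BoxIntegral.Box (Fin 4), (I : WithTop (BoxIntegral.Box (Fin 4))) ≤ ⊤ →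
      ∀ {i : Fin 4} {x : ℝ}, x ∈ Set.Ioo (I.lower i) (I.upper i) →
      (I.splitLower i x).elim' 0 μ + (I.splitUpper i x).elim' 0 μ = μ I := by
    intro I _ i x hx
    rw [BoxIntegral.Box.splitLower_def hx, BoxIntegral.Box.splitUpper_def hx]
    show μ _ + μ _ = μ I
    simp only [hμ]
    have e1 : ∀ (w : ℝ) (hw : ∀ j, I.lower j < Function.update I.upper i w j),
        ∏ j, h j (Function.update I.upper i w j - I.lower j)
          = h i (w - I.lower i) * ∏ j ∈ Finset.univ.erase i, h j (I.upper j - I.lower j) := by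
      intro w hw
      rw [← Finset.mul_prod_erase Finset.univ _ (Finset.mem_univ i)]
      congr 1
      · rw [Function.update_self]
      · exact Finset.prod_congr rfl fun j hj => by
          rw [Function.update_of_ne (Finset.ne_of_mem_erase hj)]
    have e2 : ∏ j, h j (I.upper j - Function.update I.lower i x j)
        = h i (I.upper i - x) * ∏ j ∈ Finset.univ.erase i, h j (I.upper j - I.lower j) := by
      rw [← Finset.mul_prod_erase Finset.univ _ (Finset.mem_univ i)]
      congr 1
      · rw [Function.update_self]
      · exact Finset.prod_congr rfl fun j hj => by
          rw [Function.update_of_ne (Finset.ne_of_mem_erase hj)]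
    have e0 : ∏ j, h j (I.upper j - I.lower j)
        = h i (I.upper i - I.lower i) * ∏ j ∈ Finset.univ.erase i, h j (I.upper j - I.lower j) :=
      (Finset.mul_prod_erase Finset.univ _ (Finset.mem_univ i)).symm
    have hw : ∀ j, I.lower j < Function.update I.upper i x j := by
      intro j
      rcases eq_or_ne j i with rfl | hne
      · rw [Function.update_self]; exact hx.1
      · rw [Function.update_of_ne hne]; exact I.lower_lt_upper j
    rw [e1 x hw, e2, e0, ← add_mul]
    congr 1
    rw [← hadd i]
    congr 1
    ring
  set F := BoxIntegral.BoxAdditiveMap.ofMapSplitAdd μ ⊤ hsplit with hF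
  have hcoe : ∀ J, F J = μ J := fun J => rfl
  -- build the prepartition
  have hsub : ∀ i, (t i).toSet ⊆ B.toSet := fun i => by
    rw [← hcov]; exact Set.subset_iUnion (fun i => (t i).toSet) i
  have hIocdisj : ∀ i j, i ≠ j →
      Disjoint ((t i).toBI : Set (Fin 4 → ℝ)) ((t j).toBI : Set (Fin 4 → ℝ)) := by
    intro i j hij
    by_contra hcon
    rw [Set.not_disjoint_iff] at hcon
    obtain ⟨y, hy1, hy2⟩ := hcon
    exact not_disjoint_interior (mem_toBI.1 hy1) (mem_toBI.1 hy2) (hdisj i j hij)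
  have hinj : ∀ i j : Fin m, (t i).toBI = (t j).toBI → i = j := by
    intro i j hEq
    by_contra hij
    have hyi : (t i).upper ∈ (t i).toBI :=
      mem_toBI.2 fun k => ⟨(t i).lower_lt_upper k, le_rfl⟩
    have hyj : (t i).upper ∈ (t j).toBI := hEq ▸ hyi
    exact not_disjoint_interior (mem_toBI.1 hyi) (mem_toBI.1 hyj) (hdisj i j hij)
  set π : BoxIntegral.Prepartition B.toBI :=
    ⟨Finset.univ.image (fun i => (t i).toBI),
     by
      intro J hJ
      rw [Finset.mem_image] at hJ
      obtain ⟨i, -, rfl⟩ := hJ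
      exact toBI_le (hsub i),
     by
      intro J₁ h₁ J₂ h₂ hne
      rw [Finset.mem_coe, Finset.mem_image] at h₁ h₂
      obtain ⟨i, -, rfl⟩ := h₁
      obtain ⟨j, -, rfl⟩ := h₂
      exact hIocdisj i j fun hij => hne (by rw [hij])⟩ with hπ
  have hpart : π.IsPartition := by
    intro x hx
    obtain ⟨i, hi⟩ := exists_piece hcov hx
    exact ⟨(t i).toBI, by
      show _ ∈ Finset.univ.image (fun i => (t i).toBI)
      exact Finset.mem_image.2 ⟨i, Finset.mem_univ i, rfl⟩, hi⟩
  have hsum := F.sum_partition_boxes le_top hpart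
  have : ∑ J ∈ Finset.univ.image (fun i => (t i).toBI), F J = F B.toBI := hsum
  rw [Finset.sum_image (fun i _ j _ hEq => hinj i j hEq)] at this
  simpa [hcoe, hμ, Box.side, Box.toBI] using this

/-- From irrationality of `a / b`, get additive `f g : ℝ → ℝ` with
`f a = 1, f b = 0, g a = 0, g b = 1`. -/
lemma exists_additive_pair {a b : ℝ} (hb : b ≠ 0) (hirr : Irrational (a / b)) :
    ∃ f g : ℝ → ℝ, (∀ u v, f (u + v) = f u + f v) ∧ (∀ u v, g (u + v) = g u + g v) ∧
      f a = 1 ∧ f b = 0 ∧ g a = 0 ∧ g b = 1 := by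
  classical
  have hab : a ≠ b := by
    rintro rfl
    rw [div_self hb] at hirr
    exact (Rat.not_irrational 1) (by simpa using hirr)
  have hli : LinearIndependent ℚ ![a, b] := by
    rw [LinearIndependent.pair_iff]
    intro s r hsr
    have hsr' : (s : ℝ) * a + (r : ℝ) * b = 0 := by
      simpa [Rat.smul_def] using hsr
    have hs : s = 0 := by
      by_contra hs
      have hsR : (s : ℝ) ≠ 0 := by exact_mod_cast hs
      have : a / b = ((-r / s : ℚ) : ℝ) := by
        push_cast
        field_simp
        linarith
      exact (Rat.not_irrational _) (this ▸ hirr)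
    refine ⟨hs, ?_⟩
    rw [hs] at hsr'
    have : (r : ℝ) * b = 0 := by simpa using hsr'
    rcases mul_eq_zero.1 this with h | h
    · exact_mod_cast h
    · exact absurd h hb
  have hli' : LinearIndepOn ℚ id ({a, b} : Set ℝ) := by
    have h2 := hli.linearIndepOn_id
    have hr : Set.range ![a, b] = {a, b} := by
      ext z
      simp [Fin.exists_fin_two, eq_comm, or_comm]
    rwa [hr] at h2
  set Bas := Module.Basis.extend hli' with hBas
  have haMem : a ∈ hli'.extend (Set.subset_univ _) :=
    hli'.subset_extend _ (by simp)
  have hbMem : b ∈ hli'.extend (Set.subset_univ _) :=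
    hli'.subset_extend _ (by simp)
  refine ⟨fun z => ((Bas.repr z) ⟨a, haMem⟩ : ℚ),
          fun z => ((Bas.repr z) ⟨b, hbMem⟩ : ℚ), ?_, ?_, ?_, ?_, ?_, ?_⟩
  · intro u v; dsimp only; rw [map_add]; push_cast [Finsupp.add_apply]; ring
  · intro u v; dsimp only; rw [map_add]; push_cast [Finsupp.add_apply]; ring
  · have ha' : a = Bas ⟨a, haMem⟩ := (Module.Basis.extend_apply_self hli' ⟨a, haMem⟩).symm
    have hra : Bas.repr a = Finsupp.single ⟨a, haMem⟩ 1 := by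
      have := congrArg Bas.repr ha'
      rwa [Module.Basis.repr_self] at this
    dsimp only; rw [hra, Finsupp.single_eq_same]; norm_num
  · have hb' : b = Bas ⟨b, hbMem⟩ := (Module.Basis.extend_apply_self hli' ⟨b, hbMem⟩).symm
    have hrb : Bas.repr b = Finsupp.single ⟨b, hbMem⟩ 1 := by
      have := congrArg Bas.repr hb'
      rwa [Module.Basis.repr_self] at this
    dsimp only
    rw [hrb, Finsupp.single_eq_of_ne (fun hEq => hab (congrArg Subtype.val hEq))]
    norm_num
  · have ha' : a = Bas ⟨a, haMem⟩ := (Module.Basis.extend_apply_self hli' ⟨a, haMem⟩).symm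
    have hra : Bas.repr a = Finsupp.single ⟨a, haMem⟩ 1 := by
      have := congrArg Bas.repr ha'
      rwa [Module.Basis.repr_self] at this
    dsimp only
    rw [hra, Finsupp.single_eq_of_ne (fun hEq => hab (congrArg Subtype.val hEq).symm)]
    norm_num
  · have hb' : b = Bas ⟨b, hbMem⟩ := (Module.Basis.extend_apply_self hli' ⟨b, hbMem⟩).symm
    have hrb : Bas.repr b = Finsupp.single ⟨b, hbMem⟩ 1 := by
      have := congrArg Bas.repr hb'
      rwa [Module.Basis.repr_self] at this
    dsimp only; rw [hrb, Finsupp.single_eq_same]; norm_num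

lemma piece_combo_zero (f g : ℝ → ℝ) (x y : ℝ) (k : Fin 4) (s : Fin 4 → ℝ)
    (hs : ∀ j, s j = if j = k then y else x) :
    f (s 0) * f (s 1) * g (s 2) * g (s 3)
    + f (s 0) * g (s 1) * f (s 2) * g (s 3)
    + g (s 0) * f (s 1) * g (s 2) * f (s 3)
    + g (s 0) * g (s 1) * f (s 2) * f (s 3)
    - 2 * (f (s 0) * g (s 1) * g (s 2) * f (s 3))
    - 2 * (g (s 0) * f (s 1) * f (s 2) * g (s 3)) = 0 := by
  rw [hs 0, hs 1, hs 2, hs 3]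
  fin_cases k <;> simp <;> ring

lemma side_eq_ite {P : Box 4} {σ : Equiv.Perm (Fin 4)} {x y : ℝ}
    (hside : P.side = ![x, x, x, y] ∘ σ) :
    ∀ j, P.side j = if j = σ.symm 3 then y else x := by
  intro j
  rw [hside]
  simp only [Function.comp_apply]
  by_cases hj : j = σ.symm 3
  · subst hj
    rw [if_pos rfl, Equiv.apply_symm_apply]
    rfl
  · rw [if_neg hj]
    have hσ : σ j ≠ 3 := by
      intro h
      exact hj (by rw [← h, Equiv.symm_apply_apply])
    generalize σ j = v at hσ
    fin_cases v <;> simp_all <;> rfl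

theorem aabb_aux_main (a b : ℝ) (ha : 0 < a) (hb : 0 < b)
    (hirr : Irrational (a / b)) :
    ∀ B : Box 4, B.side = ![a, a, b, b] →
      ¬ ∃ (m : ℕ) (t : Fin m → Box 4), IsDissection B t ∧
        ∀ i, ∃ (σ : Equiv.Perm (Fin 4)) (x y : ℝ),
          (t i).side = ![x, x, x, y] ∘ σ := by
  intro B hB
  rintro ⟨m, t, hd, hshape⟩
  obtain ⟨f, g, hfadd, hgadd, hfa, hfb, hga, hgb⟩ :=
    exists_additive_pair (ne_of_gt hb) hirr
  -- additivity of each pattern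
  have haddc : ∀ c : Fin 4 → ℝ → ℝ, (∀ j, c j = f ∨ c j = g) →
      ∀ j u v, c j (u + v) = c j u + c j v := by
    intro c hc j u v
    rcases hc j with h | h <;> rw [h]
    · exact hfadd u v
    · exact hgadd u v
  have hcases : ∀ (F G : ℝ → ℝ) (j : Fin 4), ![F, F, G, G] j = F ∨ ![F, F, G, G] j = G := by
    intro F G j; fin_cases j <;> simp
  have hcases2 : ∀ (F G : ℝ → ℝ) (j : Fin 4), ![F, G, F, G] j = F ∨ ![F, G, F, G] j = G := by
    intro F G j; fin_cases j <;> simp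
  have hcases3 : ∀ (F G : ℝ → ℝ) (j : Fin 4), ![F, G, G, F] j = F ∨ ![F, G, G, F] j = G := by
    intro F G j; fin_cases j <;> simp
  -- the six sum identities
  have S1 := dissection_sum B t hd ![f, f, g, g] (haddc _ (hcases f g))
  have S2 := dissection_sum B t hd ![f, g, f, g] (haddc _ (hcases2 f g))
  have S3 := dissection_sum B t hd ![g, f, g, f] (haddc _ (fun j => (hcases2 g f j).symm))
  have S4 := dissection_sum B t hd ![g, g, f, f] (haddc _ (fun j => (hcases g f j).symm))
  have S5 := dissection_sum B t hd ![f, g, g, f] (haddc _ (hcases3 f g))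
  have S6 := dissection_sum B t hd ![g, f, f, g] (haddc _ (fun j => (hcases3 g f j).symm))
  simp only [Fin.prod_univ_four, Matrix.cons_val_zero, Matrix.cons_val_one, Matrix.head_cons,
    Matrix.cons_val_two, Matrix.tail_cons, Matrix.cons_val_three, hB] at S1 S2 S3 S4 S5 S6
  simp only [hfa, hfb, hga, hgb] at S1 S2 S3 S4 S5 S6
  -- combine
  have htot : ∑ i : Fin m,
      (f ((t i).side 0) * f ((t i).side 1) * g ((t i).side 2) * g ((t i).side 3)
      + f ((t i).side 0) * g ((t i).side 1) * f ((t i).side 2) * g ((t i).side 3)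
      + g ((t i).side 0) * f ((t i).side 1) * g ((t i).side 2) * f ((t i).side 3)
      + g ((t i).side 0) * g ((t i).side 1) * f ((t i).side 2) * f ((t i).side 3)
      - 2 * (f ((t i).side 0) * g ((t i).side 1) * g ((t i).side 2) * f ((t i).side 3))
      - 2 * (g ((t i).side 0) * f ((t i).side 1) * f ((t i).side 2) * g ((t i).side 3))) = 1 := by
    rw [Finset.sum_sub_distrib, Finset.sum_sub_distrib, Finset.sum_add_distrib,
      Finset.sum_add_distrib, Finset.sum_add_distrib, ← Finset.mul_sum, ← Finset.mul_sum]
    rw [S1, S2, S3, S4, S5, S6]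
    norm_num
  have hzero : ∑ i : Fin m,
      (f ((t i).side 0) * f ((t i).side 1) * g ((t i).side 2) * g ((t i).side 3)
      + f ((t i).side 0) * g ((t i).side 1) * f ((t i).side 2) * g ((t i).side 3)
      + g ((t i).side 0) * f ((t i).side 1) * g ((t i).side 2) * f ((t i).side 3)
      + g ((t i).side 0) * g ((t i).side 1) * f ((t i).side 2) * f ((t i).side 3)
      - 2 * (f ((t i).side 0) * g ((t i).side 1) * g ((t i).side 2) * f ((t i).side 3))
      - 2 * (g ((t i).side 0) * f ((t i).side 1) * f ((t i).side 2) * g ((t i).side 3))) = 0 := by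
    apply Finset.sum_eq_zero
    intro i _
    obtain ⟨σ, x, y, hside⟩ := hshape i
    exact piece_combo_zero f g x y (σ.symm 3) _ (side_eq_ite hside)
  rw [hzero] at htot
  norm_num at htot

end AuxProof

/-- If `a / b` is irrational, the 4-dimensional box `a × a × b × b` cannot be
partitioned into boxes of type `x × x × x × y` (up to permutation of coordinates). -/
theorem aabb_not_into_xxxy (a b : ℝ) (ha : 0 < a) (hb : 0 < b)
    (hirr : Irrational (a / b)) :
    ∀ B : Box 4, B.side = ![a, a, b, b] →
      ¬ ∃ (m : ℕ) (t : Fin m → Box 4), IsDissection B t ∧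
        ∀ i, ∃ (σ : Equiv.Perm (Fin 4)) (x y : ℝ),
          (t i).side = ![x, x, x, y] ∘ σ :=
  aabb_aux_main a b ha hb hirr
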